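/- arXiv:2111.02065 — 2 statements merged into one kernel-verified Lean document; each statement's English description precedes it below -/
import Mathlib

section
/- Let n, m be positive integers and G a graph with maximum degree Δ(G) ≤ m+n−3. Then the edge set of G can be partitioned into two graphs G1 and G2 with Δ(G1) ≤ n−1 and Δ(G2) ≤ m−1; equivalently, G admits a red/blue edge coloring with no red K_{1,n} and no blue K_{1,m}. -/
open SimpleGraph

/-- The subgraph of `G` consisting of edges with color `b` under the 2-coloring `c`. -/
def colorSub {α : Type*} (G : SimpleGraph α) (c : Sym2 α → Bool) (b : Bool) :
    SimpleGraph α where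
  Adj x y := G.Adj x y ∧ c s(x, y) = b
  symm := ⟨fun x y ⟨h1, h2⟩ => ⟨h1.symm, by rwa [Sym2.eq_swap]⟩⟩
  loopless := ⟨fun x ⟨h, _⟩ => G.irrefl h⟩

/-- `G` contains a copy of `H` (as a not necessarily induced subgraph). -/
def Contains {α β : Type*} (G : SimpleGraph α) (H : SimpleGraph β) : Prop :=
  ∃ f : β ↪ α, ∀ ⦃a b : β⦄, H.Adj a b → G.Adj (f a) (f b)

/-- `G → (F₁, F₂)`: every red/blue edge coloring of `G` yields a red `F₁` or a blue `F₂`. -/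
def Arrows {α β γ : Type*} (G : SimpleGraph α) (F₁ : SimpleGraph β) (F₂ : SimpleGraph γ) :
    Prop :=
  ∀ c : Sym2 α → Bool,
    Contains (colorSub G c true) F₁ ∨ Contains (colorSub G c false) F₂

/-- The star `K_{1,n}` with center `0` and `n` leaves. -/
def starG (n : ℕ) : SimpleGraph (Fin (n + 1)) where
  Adj i j := i ≠ j ∧ (i = 0 ∨ j = 0)
  symm := ⟨fun i j ⟨h1, h2⟩ => ⟨h1.symm, h2.symm⟩⟩
  loopless := ⟨fun i ⟨h, _⟩ => h rfl⟩

/-- The star forest `⊔_{j} K_{1, m j}`, with `j`-th component a star with center `⟨j, 0⟩`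
and `m j` leaves. -/
def starForest (t : ℕ) (m : Fin t → ℕ) :
    SimpleGraph (Σ j : Fin t, Fin (m j + 1)) where
  Adj x y := x.1 = y.1 ∧ x.2.val ≠ y.2.val ∧ (x.2.val = 0 ∨ y.2.val = 0)
  symm := ⟨fun x y ⟨h1, h2, h3⟩ => ⟨h1.symm, h2.symm, h3.symm⟩⟩
  loopless := ⟨fun x ⟨_, h, _⟩ => h rfl⟩

/-- The size Ramsey number `r̂(F₁, F₂)`: the minimum number of edges of a (finite) graph
`G` with `G → (F₁, F₂)`. -/
noncomputable def sizeRamsey {β γ : Type*} (F₁ : SimpleGraph β) (F₂ : SimpleGraph γ) : ℕ :=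
  sInf {N : ℕ | ∃ (V : Type) (_ : Fintype V) (G : SimpleGraph V),
    G.edgeSet.ncard = N ∧ Arrows G F₁ F₂}


set_option linter.unusedSectionVars false

namespace AuxStarFree

open Finset SimpleGraph

variable {V : Type} [Fintype V] [DecidableEq V]

/-- Degree of a vertex in a finite edge set. -/
def edeg (F : Finset (Sym2 V)) (v : V) : ℕ := (F.filter (fun e => v ∈ e)).card

lemma edeg_insert {F : Finset (Sym2 V)} {e : Sym2 V} (he : e ∉ F) (y : V) :
    edeg (insert e F) y = edeg F y + if y ∈ e then 1 else 0 := by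
  unfold edeg
  rw [filter_insert]
  split_ifs with h
  · rw [card_insert_of_notMem (fun hc => he (mem_filter.mp hc).1)]
  · omega

lemma edeg_erase {F : Finset (Sym2 V)} {e : Sym2 V} (he : e ∈ F) (y : V) :
    edeg F y = edeg (F.erase e) y + if y ∈ e then 1 else 0 := by
  have h2 : e ∉ F.erase e := notMem_erase e F
  conv_lhs => rw [(insert_erase he).symm]
  exact edeg_insert h2 y

lemma symmDiff_singleton_not_mem {F : Finset (Sym2 V)} {e : Sym2 V} (h : e ∉ F) :
    symmDiff F {e} = insert e F := by
  ext x
  rw [Finset.mem_symmDiff]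
  simp only [mem_singleton, mem_insert]
  constructor
  · rintro (⟨hx, hne⟩ | ⟨rfl, _⟩)
    · exact Or.inr hx
    · exact Or.inl rfl
  · rintro (rfl | hx)
    · exact Or.inr ⟨rfl, h⟩
    · exact Or.inl ⟨hx, fun hh => h (hh ▸ hx)⟩

lemma symmDiff_singleton_mem {F : Finset (Sym2 V)} {e : Sym2 V} (h : e ∈ F) :
    symmDiff F {e} = F.erase e := by
  ext x
  rw [Finset.mem_symmDiff]
  simp only [mem_singleton, mem_erase]
  constructor
  · rintro (⟨hx, hne⟩ | ⟨rfl, hne⟩)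
    · exact ⟨hne, hx⟩
    · exact absurd h hne
  · rintro ⟨hne, hx⟩
    exact Or.inl ⟨hx, hne⟩

lemma insert_eq_symmDiff {T : Finset (Sym2 V)} {e : Sym2 V} (h : e ∉ T) :
    insert e T = symmDiff T {e} := (symmDiff_singleton_not_mem h).symm

lemma indicator_mem {u x : V} (hux : u ≠ x) (y : V) :
    (if y ∈ s(u, x) then (1 : ℤ) else 0) =
      (if y = u then 1 else 0) + (if y = x then 1 else 0) := by
  simp only [Sym2.mem_iff]
  by_cases h1 : y = u <;> by_cases h2 : y = x
  · exact absurd (h1.symm.trans h2) hux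
  · subst h1; simp [h2, hux]
  · subst h2; simp [h1, Ne.symm hux]
  · simp [h1, h2]

variable (G : SimpleGraph V) [DecidableRel G.Adj] (b : ℕ)

/-- Alternating trail reachability. -/
inductive Reach (F : Finset (Sym2 V)) : V → V → Bool → Finset (Sym2 V) → Prop
  | nil (v : V) (h : edeg F v + b + 1 ≤ G.degree v) : Reach F v v false ∅
  | odd {v u x : V} {T : Finset (Sym2 V)} (h : Reach F v u false T)
      (he : s(u, x) ∈ G.edgeFinset) (hne : s(u, x) ∉ F) (hT : s(u, x) ∉ T) :
      Reach F v x true (insert s(u, x) T)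
  | even {v u x : V} {T : Finset (Sym2 V)} (h : Reach F v u true T)
      (he : s(u, x) ∈ G.edgeFinset) (hf : s(u, x) ∈ F) (hT : s(u, x) ∉ T) :
      Reach F v x false (insert s(u, x) T)

variable {G b}

lemma reach_subset {F : Finset (Sym2 V)} {v u p T} (h : Reach G b F v u p T) :
    T ⊆ G.edgeFinset := by
  induction h with
  | nil => exact empty_subset _
  | odd h he hne hT ih => exact insert_subset he ih
  | even h he hf hT ih => exact insert_subset he ih

lemma reach_start {F : Finset (Sym2 V)} {v u p T} (h : Reach G b F v u p T) :
    edeg F v + b + 1 ≤ G.degree v := by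
  induction h with
  | nil h => exact h
  | odd h he hne hT ih => exact ih
  | even h he hf hT ih => exact ih

lemma reach_nonempty_or {F : Finset (Sym2 V)} {v u p T} (h : Reach G b F v u p T) :
    (T = ∅ ∧ u = v ∧ p = false) ∨ T.Nonempty := by
  induction h with
  | nil h => exact Or.inl ⟨rfl, rfl, rfl⟩
  | odd h he hne hT ih => exact Or.inr ⟨_, mem_insert_self _ _⟩
  | even h he hf hT ih => exact Or.inr ⟨_, mem_insert_self _ _⟩

lemma ne_of_edge {u x : V} (he : s(u, x) ∈ G.edgeFinset) : u ≠ x :=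
  G.ne_of_adj ((G.mem_edgeSet).mp (mem_edgeFinset.mp he))

lemma reach_flip {F : Finset (Sym2 V)} {v u p T} (h : Reach G b F v u p T) :
    (T = ∅ ∧ u = v ∧ p = false) ∨
    (∀ x : V, (edeg (symmDiff F T) x : ℤ) =
      (edeg F x : ℤ) + (if x = v then 1 else 0) +
        (if x = u then (if p then 1 else -1) else 0)) := by
  induction h with
  | nil h => exact Or.inl ⟨rfl, rfl, rfl⟩
  | @odd u x T h he hne hT ih =>
    right
    have hux : u ≠ x := ne_of_edge he
    have hsd : symmDiff F (insert s(u, x) T) = symmDiff (symmDiff F T) {s(u, x)} := by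
      rw [insert_eq_symmDiff hT, symmDiff_assoc]
    have hnotin : s(u, x) ∉ symmDiff F T := by
      rw [Finset.mem_symmDiff]
      rintro (⟨h1, -⟩ | ⟨h1, -⟩)
      · exact hne h1
      · exact hT h1
    have hins : symmDiff F (insert s(u, x) T) = insert s(u, x) (symmDiff F T) := by
      rw [hsd, symmDiff_singleton_not_mem hnotin]
    intro y
    have h1 : (edeg (symmDiff F (insert s(u, x) T)) y : ℤ) =
        (edeg (symmDiff F T) y : ℤ) + if y ∈ s(u, x) then 1 else 0 := by
      rw [hins, edeg_insert hnotin y]; push_cast; split_ifs <;> omega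
    rcases ih with ⟨rfl, rfl, -⟩ | ihf
    · have hFT : symmDiff F (∅ : Finset (Sym2 V)) = F := by
        rw [← Finset.bot_eq_empty, symmDiff_bot]
      rw [hFT] at h1
      rw [h1, indicator_mem hux y]
      simp only [eq_self_iff_true, if_true, Bool.false_eq_true, if_false]
      split_ifs <;> first
        | ring
        | exact absurd (‹y = u›.symm.trans ‹y = x›) hux
    · rw [h1, ihf y, indicator_mem hux y]
      simp only [eq_self_iff_true, if_true, Bool.false_eq_true, if_false]
      split_ifs <;> first
        | ring
        | exact absurd (‹y = u›.symm.trans ‹y = x›) hux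
  | @even u x T h he hf hT ih =>
    right
    have hux : u ≠ x := ne_of_edge he
    have hin : s(u, x) ∈ symmDiff F T := by
      rw [Finset.mem_symmDiff]
      exact Or.inl ⟨hf, hT⟩
    have hsd : symmDiff F (insert s(u, x) T) = (symmDiff F T).erase s(u, x) := by
      rw [insert_eq_symmDiff hT, ← symmDiff_assoc, symmDiff_singleton_mem hin]
    rcases ih with ⟨-, -, hpf⟩ | ihf
    · exact absurd hpf (by simp)
    · intro y
      have h1 : (edeg (symmDiff F T) y : ℤ) =
          (edeg ((symmDiff F T).erase s(u, x)) y : ℤ) + if y ∈ s(u, x) then 1 else 0 := by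
        rw [edeg_erase hin y]; push_cast; split_ifs <;> omega
      have h2 : (edeg (symmDiff F (insert s(u, x) T)) y : ℤ) =
          (edeg (symmDiff F T) y : ℤ) - (if y ∈ s(u, x) then 1 else 0) := by
        rw [hsd]; omega
      rw [h2, ihf y, indicator_mem hux y]
      simp only [eq_self_iff_true, if_true, Bool.false_eq_true, if_false]
      split_ifs <;> first
        | ring
        | exact absurd (‹y = u›.symm.trans ‹y = x›) hux

lemma reach_mem_trail {F : Finset (Sym2 V)} {v u p T} (h : Reach G b F v u p T) :
    ∀ e ∈ T, (e ∈ F → ∃ z ∈ e, ∃ v' T', Reach G b F v' z false T') ∧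
             (e ∉ F → ∃ z ∈ e, ∃ v' T', Reach G b F v' z true T') := by
  induction h with
  | nil => intro e he; exact absurd he (notMem_empty e)
  | @odd u x T h he hne hT ih =>
    intro e heT
    rcases mem_insert.mp heT with rfl | heT'
    · refine ⟨fun hF => absurd hF hne, fun _ => ⟨x, ?_, _, _, Reach.odd h he hne hT⟩⟩
      simp [Sym2.mem_iff]
    · exact ih e heT'
  | @even u x T h he hf hT ih =>
    intro e heT
    rcases mem_insert.mp heT with rfl | heT'
    · refine ⟨fun _ => ⟨x, ?_, _, _, Reach.even h he hf hT⟩, fun hF => absurd hf hF⟩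
      simp [Sym2.mem_iff]
    · exact ih e heT'



lemma edeg_edgeFinset (G : SimpleGraph V) [DecidableRel G.Adj] (v : V) :
    edeg G.edgeFinset v = G.degree v := by
  unfold edeg
  have h : G.edgeFinset.filter (fun e => v ∈ e) = G.incidenceFinset v := by
    ext e
    simp only [mem_filter, mem_edgeFinset, mem_incidenceFinset]
    constructor
    · rintro ⟨h1, h2⟩; exact ⟨h1, h2⟩
    · rintro ⟨h1, h2⟩; exact ⟨h1, h2⟩
  rw [h, card_incidenceFinset_eq_degree]

lemma edeg_sdiff (G : SimpleGraph V) [DecidableRel G.Adj] {F : Finset (Sym2 V)}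
    (hF : F ⊆ G.edgeFinset) (v : V) :
    edeg F v + edeg (G.edgeFinset \ F) v = G.degree v := by
  rw [← edeg_edgeFinset G v]
  unfold edeg
  rw [← card_union_of_disjoint (disjoint_filter_filter Finset.disjoint_sdiff)]
  congr 1
  rw [← filter_union, union_sdiff_of_subset hF]

lemma sum_edeg (S : Finset V) (F : Finset (Sym2 V)) :
    ∑ v ∈ S, edeg F v = ∑ e ∈ F, (S.filter (fun x => x ∈ e)).card := by
  unfold edeg
  simp_rw [card_filter]
  exact sum_comm

lemma card_filter_sym2 (S : Finset V) {x y : V} (hxy : x ≠ y) :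
    (S.filter (fun z => z ∈ s(x, y))).card =
      (if x ∈ S then 1 else 0) + (if y ∈ S then 1 else 0) := by
  have h : S.filter (fun z => z ∈ s(x, y)) = S.filter (fun z => z = x ∨ z = y) := by
    apply filter_congr; intro z _; simp [Sym2.mem_iff]
  have hd : Disjoint (S.filter (fun z => z = x)) (S.filter (fun z => z = y)) := by
    rw [Finset.disjoint_left]
    intro c hc1 hc2
    exact hxy (((mem_filter.mp hc1).2.symm.trans (mem_filter.mp hc2).2))
  rw [h, filter_or, card_union_of_disjoint hd, filter_eq', filter_eq']
  split_ifs <;> simp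

lemma reach_flip' {G : SimpleGraph V} [DecidableRel G.Adj] {b : ℕ}
    {F : Finset (Sym2 V)} {v u : V} {p : Bool} {T : Finset (Sym2 V)}
    (h : Reach G b F v u p T) (hT : T.Nonempty) :
    (∀ x, x ≠ v → x ≠ u → edeg (symmDiff F T) x = edeg F x) ∧
    (v ≠ u → (edeg (symmDiff F T) v : ℤ) = edeg F v + 1 ∧
             (edeg (symmDiff F T) u : ℤ) = edeg F u + (if p then 1 else -1)) ∧
    (v = u → (edeg (symmDiff F T) v : ℤ) = edeg F v + (if p then 2 else 0)) := by
  rcases reach_flip h with ⟨h1, -, -⟩ | hfl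
  · rw [h1] at hT; exact absurd hT (by simp)
  · refine ⟨?_, ?_, ?_⟩
    · intro x hxv hxu
      have t := hfl x
      rw [if_neg hxv, if_neg hxu] at t
      omega
    · intro hvu
      constructor
      · have t := hfl v
        rw [if_pos rfl, if_neg hvu] at t
        linarith
      · have t := hfl u
        rw [if_neg (Ne.symm hvu), if_pos rfl] at t
        linarith
    · intro hvu
      subst hvu
      have t := hfl v
      rw [if_pos rfl, if_pos rfl] at t
      cases p
      · simp only [Bool.false_eq_true, if_false] at t ⊢
        linarith
      · simp only [if_true] at t ⊢
        linarith

theorem core (G : SimpleGraph V) [DecidableRel G.Adj] (a b : ℕ)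
    (hd : ∀ v, G.degree v + 1 ≤ a + b) :
    ∃ F : Finset (Sym2 V), F ⊆ G.edgeFinset ∧ (∀ v, edeg F v ≤ a) ∧
      (∀ v, G.degree v ≤ edeg F v + b) := by
  classical
  obtain ⟨F, hFc, hFmin⟩ := exists_min_image
      ((G.edgeFinset.powerset).filter (fun F => ∀ v, edeg F v ≤ a))
      (fun F => ∑ v, (G.degree v - b - edeg F v))
      ⟨∅, mem_filter.mpr ⟨empty_mem_powerset _, fun v => by simp [edeg]⟩⟩
  have hFs : F ⊆ G.edgeFinset := mem_powerset.mp (mem_filter.mp hFc).1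
  have hcap : ∀ v, edeg F v ≤ a := (mem_filter.mp hFc).2
  refine ⟨F, hFs, hcap, ?_⟩
  by_contra hcon
  push_neg at hcon
  obtain ⟨v₀, hv₀⟩ := hcon
  -- hv₀ : edeg F v₀ + b < G.degree v₀
  have hmin : ∀ F' : Finset (Sym2 V), F' ⊆ G.edgeFinset → (∀ v, edeg F' v ≤ a) →
      (∑ v, (G.degree v - b - edeg F v)) ≤ (∑ v, (G.degree v - b - edeg F' v)) :=
    fun F' h1 h2 => hFmin F' (mem_filter.mpr ⟨mem_powerset.mpr h1, h2⟩)
  set OddR : V → Prop := fun x => ∃ v T, Reach G b F v x true T with hOddR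
  set EvenR : V → Prop := fun x => ∃ v T, Reach G b F v x false T with hEvenR
  -- no improving flip: odd-reachable vertices are saturated
  have F1 : ∀ z, OddR z → edeg F z = a := by
    rintro z ⟨v, T, hr⟩
    by_contra hne
    have hza : edeg F z + 1 ≤ a := (hcap z).lt_of_ne hne
    have hst := reach_start hr
    have hva : edeg F v + 2 ≤ a := by have := hd v; omega
    have hTne : T.Nonempty := by
      rcases reach_nonempty_or hr with ⟨-, -, habs⟩ | hne'
      · simp at habs
      · exact hne'
    obtain ⟨hf0, hf1, hf2⟩ := reach_flip' hr hTne
    set F' := symmDiff F T with hF'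
    have hsub : F' ⊆ G.edgeFinset := by
      intro e he
      rcases Finset.mem_symmDiff.mp he with ⟨h1, -⟩ | ⟨h1, -⟩
      · exact hFs h1
      · exact reach_subset hr h1
    have hmono : ∀ x, edeg F x ≤ edeg F' x := by
      intro x
      by_cases hxv : x = v
      · subst hxv
        by_cases hxz : x = z
        · subst hxz
          have t := hf2 rfl
          simp only [if_true] at t
          omega
        · have t := (hf1 hxz).1
          omega
      · by_cases hxz : x = z
        · subst hxz
          have t := (hf1 (fun hh => hxv hh.symm)).2
          simp only [if_true] at t
          omega
        · rw [hf0 x hxv hxz]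
    have hcap' : ∀ x, edeg F' x ≤ a := by
      intro x
      by_cases hxv : x = v
      · subst hxv
        by_cases hxz : x = z
        · subst hxz
          have t := hf2 rfl
          simp only [if_true] at t
          omega
        · have t := (hf1 hxz).1
          omega
      · by_cases hxz : x = z
        · subst hxz
          have t := (hf1 (fun hh => hxv hh.symm)).2
          simp only [if_true] at t
          omega
        · rw [hf0 x hxv hxz]; exact hcap x
    have hstrictv : edeg F v + 1 ≤ edeg F' v := by
      by_cases hvz : v = z
      · have t := hf2 hvz
        simp only [if_true] at t
        omega
      · have t := (hf1 hvz).1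
        omega
    have hlt : (∑ x, (G.degree x - b - edeg F' x)) < (∑ x, (G.degree x - b - edeg F x)) := by
      apply sum_lt_sum
      · intro i _
        have := hmono i
        omega
      · refine ⟨v, mem_univ v, ?_⟩
        have := hstrictv
        omega
    exact absurd (hmin F' hsub hcap') (not_le.mpr hlt)
  -- even-reachable vertices are tight or deficient
  have F2 : ∀ z, EvenR z → edeg F z + b ≤ G.degree z := by
    rintro z ⟨v, T, hr⟩
    by_contra hsl
    push_neg at hsl
    -- hsl : G.degree z < edeg F z + b
    have hst := reach_start hr
    have hva : edeg F v + 2 ≤ a := by have := hd v; omega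
    rcases reach_nonempty_or hr with ⟨-, heq, -⟩ | hTne
    · subst heq
      omega
    · have hvz : v ≠ z := by
        rintro rfl
        omega
      obtain ⟨hf0, hf1, hf2⟩ := reach_flip' hr hTne
      set F' := symmDiff F T with hF'
      have hsub : F' ⊆ G.edgeFinset := by
        intro e he
        rcases Finset.mem_symmDiff.mp he with ⟨h1, -⟩ | ⟨h1, -⟩
        · exact hFs h1
        · exact reach_subset hr h1
      have hfv : (edeg F' v : ℤ) = edeg F v + 1 := (hf1 hvz).1
      have hfz : (edeg F' z : ℤ) = edeg F z - 1 := by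
        have t := (hf1 hvz).2
        simp only [Bool.false_eq_true, if_false] at t
        linarith
      have hcap' : ∀ x, edeg F' x ≤ a := by
        intro x
        by_cases hxv : x = v
        · subst hxv; omega
        · by_cases hxz : x = z
          · subst hxz
            have := hcap x
            omega
          · rw [hf0 x hxv hxz]; exact hcap x
      have hlt : (∑ x, (G.degree x - b - edeg F' x)) < (∑ x, (G.degree x - b - edeg F x)) := by
        apply sum_lt_sum
        · intro i _
          by_cases hiv : i = v
          · subst hiv; omega
          · by_cases hiz : i = z
            · subst hiz
              omega
            · rw [hf0 i hiv hiz]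
        · refine ⟨v, mem_univ v, ?_⟩
          omega
      exact absurd (hmin F' hsub hcap') (not_le.mpr hlt)
  have hOW : ∀ x, OddR x → EvenR x → False := by
    intro x h1 h2
    have e1 := F1 x h1
    have e2 := F2 x h2
    have := hd x
    have := hv₀
    have hst : edeg F v₀ + b + 1 ≤ G.degree v₀ := by omega
    have := hd v₀
    omega
  have F4 : ∀ x y, OddR x → s(x, y) ∈ F → EvenR y := by
    rintro x y ⟨v, T, hr⟩ hxy
    by_cases hT : s(x, y) ∈ T
    · obtain ⟨z, hz, hzE⟩ := (reach_mem_trail hr _ hT).1 hxy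
      rcases Sym2.mem_iff.mp hz with rfl | rfl
      · exact absurd hzE (fun h => hOW z ⟨v, T, hr⟩ h)
      · exact hzE
    · exact ⟨v, _, Reach.even hr (hFs hxy) hxy hT⟩
  have F3 : ∀ x y, EvenR x → s(x, y) ∈ G.edgeFinset → s(x, y) ∉ F → OddR y := by
    rintro x y ⟨v, T, hr⟩ he hxy
    by_cases hT : s(x, y) ∈ T
    · obtain ⟨z, hz, hzO⟩ := (reach_mem_trail hr _ hT).2 hxy
      rcases Sym2.mem_iff.mp hz with rfl | rfl
      · exact absurd hzO (fun h => hOW z h ⟨v, T, hr⟩)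
      · exact hzO
    · exact ⟨v, _, Reach.odd hr he hxy hT⟩
  -- counting
  set Of : Finset V := univ.filter (fun x => OddR x) with hOf
  set Wf : Finset V := univ.filter (fun x => EvenR x) with hWf
  have hmemO : ∀ x, x ∈ Of ↔ OddR x := by intro x; simp [hOf]
  have hmemW : ∀ x, x ∈ Wf ↔ EvenR x := by intro x; simp [hWf]
  have hv₀W : v₀ ∈ Wf := (hmemW v₀).mpr ⟨v₀, ∅, Reach.nil v₀ (by omega)⟩
  -- first inequality
  have perF : ∀ e ∈ F, (Of.filter (fun z => z ∈ e)).card ≤ (Wf.filter (fun z => z ∈ e)).card := by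
    intro e
    induction e using Sym2.ind with
    | _ x y =>
      intro he
      have hxy : x ≠ y := ne_of_edge (hFs he)
      rw [card_filter_sym2 Of hxy, card_filter_sym2 Wf hxy]
      by_cases hx : OddR x
      · have hyW : EvenR y := F4 x y hx he
        have hyO : ¬ OddR y := fun h => hOW y h hyW
        have hxW : ¬ EvenR x := fun h => hOW x hx h
        rw [if_pos ((hmemO x).mpr hx), if_neg (fun h => hyO ((hmemO y).mp h)),
            if_neg (fun h => hxW ((hmemW x).mp h)), if_pos ((hmemW y).mpr hyW)]
      · by_cases hy : OddR y
        · have hxW : EvenR x := F4 y x hy (Sym2.eq_swap ▸ he)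
          have hyW : ¬ EvenR y := fun h => hOW y hy h
          rw [if_neg (fun h => hx ((hmemO x).mp h)), if_pos ((hmemO y).mpr hy),
              if_pos ((hmemW x).mpr hxW), if_neg (fun h => hyW ((hmemW y).mp h))]
        · rw [if_neg (fun h => hx ((hmemO x).mp h)), if_neg (fun h => hy ((hmemO y).mp h))]
          exact Nat.zero_le _
  have hineq1 : a * Of.card + Wf.card + 1 ≤ a * Wf.card := by
    have c1 : (∑ u ∈ Of, edeg F u) = Of.card * a := by
      rw [sum_congr rfl (fun u hu => F1 u ((hmemO u).mp hu)), sum_const, smul_eq_mul]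
    have c2 : (∑ u ∈ Of, edeg F u) ≤ ∑ w ∈ Wf, edeg F w := by
      rw [sum_edeg, sum_edeg]
      exact sum_le_sum perF
    have c3 : (∑ w ∈ Wf, (edeg F w + b)) < ∑ w ∈ Wf, G.degree w := by
      apply sum_lt_sum
      · intro w hw
        exact F2 w ((hmemW w).mp hw)
      · exact ⟨v₀, hv₀W, by omega⟩
    rw [sum_add_distrib, sum_const, smul_eq_mul] at c3
    have c4 : (∑ w ∈ Wf, G.degree w) + Wf.card ≤ Wf.card * (a + b) := by
      have h := sum_le_sum (fun w (_ : w ∈ Wf) => hd w)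
      rw [sum_add_distrib, sum_const, smul_eq_mul, mul_one, sum_const, smul_eq_mul] at h
      exact h
    have hab : Wf.card * (a + b) = Wf.card * a + Wf.card * b := by ring
    have hc1 : a * Of.card = Of.card * a := by ring
    have hc2 : a * Wf.card = Wf.card * a := by ring
    omega
  have hcard1 : Of.card < Wf.card := by
    by_contra hle
    push_neg at hle
    have : a * Wf.card ≤ a * Of.card := Nat.mul_le_mul_left a hle
    omega
  -- second inequality
  set NF : Finset (Sym2 V) := G.edgeFinset \ F with hNF
  have hNFs : NF ⊆ G.edgeFinset := sdiff_subset
  have perNF : ∀ e ∈ NF, (Wf.filter (fun z => z ∈ e)).card ≤ (Of.filter (fun z => z ∈ e)).card := by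
    intro e
    induction e using Sym2.ind with
    | _ x y =>
      intro he
      have heG : s(x, y) ∈ G.edgeFinset := hNFs he
      have heF : s(x, y) ∉ F := (Finset.mem_sdiff.mp he).2
      have hxy : x ≠ y := ne_of_edge heG
      rw [card_filter_sym2 Of hxy, card_filter_sym2 Wf hxy]
      by_cases hx : EvenR x
      · have hyO : OddR y := F3 x y hx heG heF
        have hyW : ¬ EvenR y := fun h => hOW y hyO h
        have hxO : ¬ OddR x := fun h => hOW x h hx
        rw [if_pos ((hmemW x).mpr hx), if_neg (fun h => hyW ((hmemW y).mp h)),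
            if_neg (fun h => hxO ((hmemO x).mp h)), if_pos ((hmemO y).mpr hyO)]
      · by_cases hy : EvenR y
        · have hxO : OddR x := F3 y x hy (Sym2.eq_swap ▸ heG) (fun h => heF (Sym2.eq_swap ▸ h))
          have hxW : ¬ OddR y := fun h => hOW y h hy
          rw [if_neg (fun h => hx ((hmemW x).mp h)), if_pos ((hmemW y).mpr hy),
              if_pos ((hmemO x).mpr hxO), if_neg (fun h => hxW ((hmemO y).mp h))]
        · rw [if_neg (fun h => hx ((hmemW x).mp h)), if_neg (fun h => hy ((hmemW y).mp h))]
          exact Nat.zero_le _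
  have hineq2 : b * Wf.card + Of.card + 1 ≤ b * Of.card := by
    have d1 : (∑ w ∈ Wf, b) < ∑ w ∈ Wf, edeg NF w := by
      apply sum_lt_sum
      · intro w hw
        have h2 := F2 w ((hmemW w).mp hw)
        have h3 := edeg_sdiff G hFs w
        rw [← hNF] at h3
        omega
      · refine ⟨v₀, hv₀W, ?_⟩
        have h3 := edeg_sdiff G hFs v₀
        rw [← hNF] at h3
        omega
    have d2 : (∑ w ∈ Wf, edeg NF w) ≤ ∑ u ∈ Of, edeg NF u := by
      rw [sum_edeg, sum_edeg]
      exact sum_le_sum perNF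
    have d3 : (∑ u ∈ Of, edeg NF u) + Of.card ≤ Of.card * b := by
      have h := sum_le_sum (fun u (hu : u ∈ Of) => (by
        have h1 := F1 u ((hmemO u).mp hu)
        have h3 := edeg_sdiff G hFs u
        rw [← hNF] at h3
        have h4 := hd u
        omega : edeg NF u + 1 ≤ b))
      rw [sum_add_distrib, sum_const, smul_eq_mul, mul_one, sum_const, smul_eq_mul] at h
      exact h
    rw [sum_const, smul_eq_mul] at d1
    have e1 : b * Wf.card = Wf.card * b := by ring
    have e2 : b * Of.card = Of.card * b := by ring
    omega
  have hcard2 : Wf.card < Of.card := by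
    by_contra hle
    push_neg at hle
    have : b * Of.card ≤ b * Wf.card := Nat.mul_le_mul_left b hle
    omega
  omega

end AuxStarFree

/-- If `Δ(G) ≤ m + n - 3`, then `G` has a `(K_{1,n}, K_{1,m})`-free
red/blue edge coloring. -/
theorem free_coloring_of_maxDegree_le {V : Type} [Fintype V] (G : SimpleGraph V)
    [DecidableRel G.Adj] (n m : ℕ) (hn : 1 ≤ n) (hm : 1 ≤ m)
    (hΔ : G.maxDegree ≤ m + n - 3) :
    ∃ c : Sym2 V → Bool,
      ¬ Contains (colorSub G c true) (starG n) ∧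
      ¬ Contains (colorSub G c false) (starG m) := by
  classical
  open Finset in
  by_cases h3 : 3 ≤ n + m
  · have hd : ∀ v, G.degree v + 1 ≤ (n - 1) + (m - 1) := by
      intro v
      have h1 := G.degree_le_maxDegree v
      omega
    obtain ⟨F, hFs, hcap, hlow⟩ := AuxStarFree.core G (n - 1) (m - 1) hd
    refine ⟨fun e => decide (e ∈ F), ?_, ?_⟩
    · rintro ⟨f, hf⟩
      have hadj : ∀ i : Fin n, s(f 0, f i.succ) ∈ F := by
        intro i
        have hst : (starG n).Adj 0 i.succ := ⟨(Fin.succ_ne_zero i).symm, Or.inl rfl⟩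
        obtain ⟨hga, hc⟩ := hf hst
        by_contra hFmem
        simp [hFmem] at hc
      have hinj : Function.Injective (fun i : Fin n => f i.succ) :=
        fun i j h => Fin.succ_injective n (f.injective h)
      have himg : ((univ : Finset (Fin n)).image (fun i => f i.succ)).card = n := by
        rw [card_image_of_injective _ hinj, card_univ, Fintype.card_fin]
      have hle : ((univ : Finset (Fin n)).image (fun i => f i.succ)).card ≤
          (F.filter (fun e => f 0 ∈ e)).card := by
        apply card_le_card_of_injOn (fun y => s(f 0, y))
        · intro y hy
          obtain ⟨i, -, rfl⟩ := mem_image.mp hy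
          exact mem_filter.mpr ⟨hadj i, by simp⟩
        · intro y _ y' _ hyy
          exact Sym2.congr_right.mp hyy
      have h9 : AuxStarFree.edeg F (f 0) = (F.filter (fun e => f 0 ∈ e)).card := rfl
      have := hcap (f 0)
      omega
    · rintro ⟨f, hf⟩
      have hadj : ∀ i : Fin m, s(f 0, f i.succ) ∈ G.edgeFinset \ F := by
        intro i
        have hst : (starG m).Adj 0 i.succ := ⟨(Fin.succ_ne_zero i).symm, Or.inl rfl⟩
        obtain ⟨hga, hc⟩ := hf hst
        rw [mem_sdiff]
        constructor
        · exact mem_edgeFinset.mpr ((G.mem_edgeSet).mpr hga)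
        · intro hFmem
          simp [hFmem] at hc
      have hinj : Function.Injective (fun i : Fin m => f i.succ) :=
        fun i j h => Fin.succ_injective m (f.injective h)
      have himg : ((univ : Finset (Fin m)).image (fun i => f i.succ)).card = m := by
        rw [card_image_of_injective _ hinj, card_univ, Fintype.card_fin]
      have hle : ((univ : Finset (Fin m)).image (fun i => f i.succ)).card ≤
          ((G.edgeFinset \ F).filter (fun e => f 0 ∈ e)).card := by
        apply card_le_card_of_injOn (fun y => s(f 0, y))
        · intro y hy
          obtain ⟨i, -, rfl⟩ := mem_image.mp hy
          exact mem_filter.mpr ⟨hadj i, by simp⟩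
        · intro y _ y' _ hyy
          exact Sym2.congr_right.mp hyy
      have h9 : AuxStarFree.edeg (G.edgeFinset \ F) (f 0) =
          ((G.edgeFinset \ F).filter (fun e => f 0 ∈ e)).card := rfl
      have h1 := AuxStarFree.edeg_sdiff G hFs (f 0)
      have h2 := hlow (f 0)
      omega
  · have hn1 : n = 1 := by omega
    have hm1 : m = 1 := by omega
    subst hn1; subst hm1
    have hnoadj : ∀ x y : V, ¬ G.Adj x y := by
      intro x y h
      have hdeg := G.degree_le_maxDegree x
      have hne : (G.neighborFinset x).Nonempty := ⟨y, (G.mem_neighborFinset x y).mpr h⟩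
      have := card_pos.mpr hne
      rw [← G.card_neighborFinset_eq_degree x] at hdeg
      omega
    refine ⟨fun _ => true, ?_, ?_⟩
    · rintro ⟨f, hf⟩
      have hst : (starG 1).Adj 0 1 := ⟨by decide, Or.inl rfl⟩
      exact hnoadj _ _ (hf hst).1
    · rintro ⟨f, hf⟩
      have hst : (starG 1).Adj 0 1 := ⟨by decide, Or.inl rfl⟩
      exact hnoadj _ _ (hf hst).1
end

section
/- For positive integers s, t, m, n, the graph (s+t−1)K_{1,m+n−1}, the disjoint union of s+t−1 stars each with m+n−1 edges, is Ramsey for the pair (sK_{1,n}, tK_{1,m}): every red/blue edge coloring contains either s disjoint red copies of K_{1,n} or t disjoint blue copies of K_{1,m}. -/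
open SimpleGraph

lemma aux_contains {r p q L : ℕ}
    (c : Sym2 (Σ _ : Fin r, Fin (L + 1)) → Bool) (b : Bool)
    (g : Fin p → Fin r) (hg : Function.Injective g) (e : Fin p → (Fin q ↪ Fin L))
    (hc : ∀ j i, c s(⟨g j, 0⟩, ⟨g j, (e j i).succ⟩) = b) :
    Contains (colorSub (starForest r fun _ => L) c b) (starForest p fun _ => q) := by
  refine ⟨⟨fun x => ⟨g x.1, Fin.cases 0 (fun i => (e x.1 i).succ) x.2⟩, ?_⟩, ?_⟩
  · rintro ⟨j, k⟩ ⟨j', k'⟩ h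
    simp only [Sigma.mk.inj_iff] at h
    obtain ⟨h1, h2⟩ := h
    obtain rfl : j = j' := hg h1
    have h2' : (Fin.cases 0 (fun i => (e j i).succ) k : Fin (L+1))
        = Fin.cases 0 (fun i => (e j i).succ) k' := by
      exact heq_iff_eq.mp h2
    congr 1
    induction k using Fin.cases with
    | zero =>
      induction k' using Fin.cases with
      | zero => rfl
      | succ i => simp at h2'; exact absurd h2'.symm (Fin.succ_ne_zero _)
    | succ i =>
      induction k' using Fin.cases with
      | zero => simp at h2'
      | succ i' =>
        simp only [Fin.cases_succ] at h2'
        have := Fin.succ_injective _ h2'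
        rw [(e j).injective this]
  · rintro ⟨j, k⟩ ⟨j', k'⟩ h
    obtain ⟨h1, h2, h3⟩ : _ ∧ _ ∧ _ := h
    obtain rfl : j = j' := h1
    rcases h3 with h3 | h3
    · obtain rfl : k = 0 := Fin.ext h3
      have hk' : k' ≠ 0 := fun h => h2 (by rw [h])
      induction k' using Fin.cases with
      | zero => exact absurd rfl hk'
      | succ i =>
        refine ⟨⟨rfl, ?_, Or.inl ?_⟩, ?_⟩
        · show ¬ ((Fin.cases 0 (fun i => (e j i).succ) (0 : Fin (q+1)) : Fin (L+1)) : ℕ)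
            = ((Fin.cases 0 (fun i => (e j i).succ) i.succ : Fin (L+1)) : ℕ)
          simp [Fin.succ_ne_zero]
        · rfl
        · exact hc j i
    · obtain rfl : k' = 0 := Fin.ext h3
      have hk : k ≠ 0 := fun h => h2 (by rw [h])
      induction k using Fin.cases with
      | zero => exact absurd rfl hk
      | succ i =>
        refine ⟨⟨rfl, ?_, Or.inr ?_⟩, ?_⟩
        · show ¬ ((Fin.cases 0 (fun i => (e j i).succ) i.succ : Fin (L+1)) : ℕ)
            = ((Fin.cases 0 (fun i => (e j i).succ) (0 : Fin (q+1)) : Fin (L+1)) : ℕ)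
          simp [Fin.succ_ne_zero]
        · rfl
        · show c s(⟨g j, Fin.cases 0 (fun i => (e j i).succ) i.succ⟩,
              ⟨g j, Fin.cases 0 (fun i => (e j i).succ) (0 : Fin (q+1))⟩) = b
          rw [Sym2.eq_swap]
          simpa using hc j i

/-- `(s+t-1)K_{1,m+n-1} → (sK_{1,n}, tK_{1,m})`. -/
theorem stars_arrows_same_size_stars (s t m n : ℕ) (hs : 1 ≤ s) (ht : 1 ≤ t)
    (hm : 1 ≤ m) (hn : 1 ≤ n) :
    Arrows (starForest (s + t - 1) fun _ => m + n - 1)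
      (starForest s fun _ => n) (starForest t fun _ => m) := by
  intro c
  classical
  set R : Fin (s + t - 1) → Finset (Fin (m + n - 1)) := fun j =>
    Finset.univ.filter
      (fun i => c s(⟨j, (0 : Fin (m + n - 1 + 1))⟩, ⟨j, i.succ⟩) = true) with hR
  set B : Fin (s + t - 1) → Finset (Fin (m + n - 1)) := fun j =>
    Finset.univ.filter
      (fun i => c s(⟨j, (0 : Fin (m + n - 1 + 1))⟩, ⟨j, i.succ⟩) = false) with hB
  have hRB : ∀ j, (R j).card + (B j).card = m + n - 1 := by
    intro j
    have h := Finset.card_filter_add_card_filter_not (s := (Finset.univ : Finset (Fin (m + n - 1))))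
      (p := fun i => c s(⟨j, (0 : Fin (m + n - 1 + 1))⟩, ⟨j, i.succ⟩) = true)
    simpa [hR, hB, Bool.not_eq_true] using h
  have key : ∀ j, n ≤ (R j).card ∨ m ≤ (B j).card := by
    intro j; have := hRB j; omega
  set J : Finset (Fin (s + t - 1)) :=
    Finset.univ.filter (fun j => n ≤ (R j).card) with hJdef
  have hcount : J.card + (Finset.univ.filter (fun j => ¬ n ≤ (R j).card)).card = s + t - 1 := by
    have h := Finset.card_filter_add_card_filter_not
      (s := (Finset.univ : Finset (Fin (s + t - 1)))) (p := fun j => n ≤ (R j).card)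
    simpa [hJdef] using h
  by_cases hJ : s ≤ J.card
  · left
    set g := J.orderEmbOfCardLe hJ with hg
    have hmem : ∀ a, n ≤ (R (g a)).card := by
      intro a
      have := J.orderEmbOfCardLe_mem hJ a
      simpa [hJdef] using this
    refine aux_contains c true g g.injective (fun a => ((R (g a)).orderEmbOfCardLe (hmem a)).toEmbedding) ?_
    intro j i
    have := (R (g j)).orderEmbOfCardLe_mem (hmem j) i
    simpa [hR] using this
  · right
    have hJc : t ≤ (Finset.univ.filter (fun j => ¬ n ≤ (R j).card)).card := by omega
    set Jc := Finset.univ.filter (fun j => ¬ n ≤ (R j).card) with hJc'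
    set g := Jc.orderEmbOfCardLe hJc with hg
    have hmem : ∀ a, m ≤ (B (g a)).card := by
      intro a
      have h1 := Jc.orderEmbOfCardLe_mem hJc a
      simp only [hJc', Finset.mem_filter] at h1
      rcases key (g a) with h | h
      · exact absurd h h1.2
      · exact h
    refine aux_contains c false g g.injective (fun a => ((B (g a)).orderEmbOfCardLe (hmem a)).toEmbedding) ?_
    intro j i
    have := (B (g j)).orderEmbOfCardLe_mem (hmem j) i
    simpa [hB] using this
end
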